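/- Let V be a finite-dimensional complex vector space of dimension n, and A, B linear endomorphisms of V. A vector x satisfies exp(t(A+B)) x = exp(tA) x for all real t if and only if x lies in the intersection Ker(B) ∩ Ker(B∘A) ∩ Ker(B∘A²) ∩ ... ∩ Ker(B∘A^{n-1}). -/

import Mathlib

open NormedSpace

section aux

variable {V : Type*} [NormedAddCommGroup V] [NormedSpace ℂ V] [FiniteDimensional ℂ V]

/-- exp applied to a vector as a tsum. -/
lemma exp_apply_tsum (T : V →L[ℂ] V) (v : V) :
    exp T v = ∑' m : ℕ, ((m.factorial : ℂ)⁻¹ • (T ^ m) v) := by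
  rw [exp_eq_tsum (𝕂 := ℂ)]
  have hs : Summable fun m : ℕ => (m.factorial : ℂ)⁻¹ • T ^ m := expSeries_summable' T
  have := (ContinuousLinearMap.apply ℂ V v).map_tsum hs
  simpa using this

/-- derivative of `t ↦ exp(tT) v` along the reals. -/
lemma hasDerivAt_exp_apply (T : V →L[ℂ] V) (v : V) (t : ℝ) :
    HasDerivAt (fun s : ℝ => exp ((s : ℂ) • T) v) (exp ((t : ℂ) • T) (T v)) t := by
  have h1 : HasDerivAt (fun u : ℂ => exp (u • T)) (exp ((t : ℂ) • T) * T) (t : ℂ) :=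
    hasDerivAt_exp_smul_const T (t : ℂ)
  have h2 := h1.clm_apply (hasDerivAt_const (t : ℂ) v)
  simp only [ContinuousLinearMap.mul_apply, map_zero, add_zero] at h2
  have hg : HasDerivAt (fun y : ℝ => (y : ℂ)) 1 t := by
    simpa using (hasDerivAt_id t).ofReal_comp
  have h3 := HasDerivAt.scomp t h2 hg
  simpa [Function.comp_def] using h3

end aux

/-- A vector `x` satisfies `exp(t(A+B)) x = exp(tA) x` for all real `t` iff
`x ∈ Ker B ∩ Ker (B∘A) ∩ ... ∩ Ker (B∘A^(n-1))`, where `n = dim V`. -/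
theorem stmt0 {V : Type*} [NormedAddCommGroup V] [NormedSpace ℂ V]
    [FiniteDimensional ℂ V] (n : ℕ) (hn : n = Module.finrank ℂ V)
    (A B : V →L[ℂ] V) (x : V) :
    (∀ t : ℝ, exp ((t : ℂ) • (A + B)) x = exp ((t : ℂ) • A) x) ↔
      ∀ k < n, B ((A ^ k) x) = 0 := by
  constructor
  · intro h k _
    -- key: ∀ k t, exp(t(A+B)) ((A+B)^k x) = exp(tA) (A^k x)
    have key : ∀ k : ℕ, ∀ t : ℝ,
        exp ((t : ℂ) • (A + B)) (((A + B) ^ k) x) = exp ((t : ℂ) • A) ((A ^ k) x) := by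
      intro k
      induction k with
      | zero => simpa using h
      | succ k ih =>
        intro t
        have hf : (fun s : ℝ => exp ((s : ℂ) • (A + B)) (((A + B) ^ k) x)) =
            (fun s : ℝ => exp ((s : ℂ) • A) ((A ^ k) x)) := funext ih
        have d1 := hasDerivAt_exp_apply (A + B) (((A + B) ^ k) x) t
        have d2 := hasDerivAt_exp_apply A ((A ^ k) x) t
        have hder : exp ((t : ℂ) • (A + B)) ((A + B) (((A + B) ^ k) x)) =
            exp ((t : ℂ) • A) (A ((A ^ k) x)) := by
          rw [← d1.deriv, ← d2.deriv, hf]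
        have e1 : ((A + B) ^ (k + 1)) x = (A + B) (((A + B) ^ k) x) := by
          rw [pow_succ']; rfl
        have e2 : (A ^ (k + 1)) x = A ((A ^ k) x) := by
          rw [pow_succ']; rfl
        rw [e1, e2]; exact hder
    have hpow : ∀ k : ℕ, ((A + B) ^ k) x = (A ^ k) x := by
      intro k
      have := key k 0
      simpa using this
    have h1 := hpow (k + 1)
    have h2 := hpow k
    have e1 : ((A + B) ^ (k + 1)) x = (A + B) (((A + B) ^ k) x) := by
      rw [pow_succ']; rfl
    have e2 : (A ^ (k + 1)) x = A ((A ^ k) x) := by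
      rw [pow_succ']; rfl
    rw [e1, e2, h2, ContinuousLinearMap.add_apply] at h1
    exact add_eq_left.mp h1
  · intro h t
    -- first: B (A^k x) = 0 for ALL k, via Cayley–Hamilton
    set W : Submodule ℂ V := Submodule.span ℂ ((fun k : ℕ => (A ^ k) x) '' Set.Iio n) with hW
    have hWker : ∀ v ∈ W, B v = 0 := by
      intro v hv
      have : W ≤ LinearMap.ker (B : V →ₗ[ℂ] V) := by
        rw [hW, Submodule.span_le]
        rintro _ ⟨k, hk, rfl⟩
        simpa using h k hk
      simpa using this hv
    have hWmem : ∀ k < n, (A ^ k) x ∈ W := fun k hk =>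
      Submodule.subset_span ⟨k, hk, rfl⟩
    -- A maps W into W
    have hAW : ∀ v ∈ W, A v ∈ W := by
      -- Cayley–Hamilton: A^n x ∈ W
      have hch : ∀ v : V, (A ^ n) v ∈ Submodule.span ℂ ((fun k : ℕ => (A ^ k) v) '' Set.Iio n) := by
        intro v
        by_cases hn0 : n = 0
        · subst hn0
          have : Module.finrank ℂ V = 0 := hn.symm
          have hv : v = 0 := by
            have : Subsingleton V := by
              rwa [Module.finrank_zero_iff] at this
            exact Subsingleton.elim v 0
          simp [hv]
        have hA : Polynomial.aeval (A : V →ₗ[ℂ] V) (LinearMap.charpoly (A : V →ₗ[ℂ] V)) = 0 :=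
          LinearMap.aeval_self_charpoly _
        set p := LinearMap.charpoly (A : V →ₗ[ℂ] V) with hp
        have hdeg : p.natDegree = n := by
          rw [hp, LinearMap.charpoly_natDegree, hn]
        have hmonic : p.Monic := LinearMap.charpoly_monic _
        have hsum : (0 : V →ₗ[ℂ] V) =
            ∑ i ∈ Finset.range (n + 1), p.coeff i • ((A : V →ₗ[ℂ] V) ^ i) := by
          rw [← hA, Polynomial.aeval_eq_sum_range' (by omega : p.natDegree < n + 1)]
        have happ : (0 : V) = ∑ i ∈ Finset.range (n + 1), p.coeff i • ((A : V →ₗ[ℂ] V) ^ i) v := by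
          have := congrArg (fun f : V →ₗ[ℂ] V => f v) hsum
          simpa [LinearMap.sum_apply] using this
        rw [Finset.sum_range_succ] at happ
        have hlead : p.coeff n = 1 := by
          have := hmonic.coeff_natDegree
          rwa [hdeg] at this
        rw [hlead, one_smul] at happ
        have hAn : ((A : V →ₗ[ℂ] V) ^ n) v =
            -∑ i ∈ Finset.range n, p.coeff i • ((A : V →ₗ[ℂ] V) ^ i) v :=
          eq_neg_of_add_eq_zero_right happ.symm
        have hcoe : ∀ (i : ℕ) (w : V), ((A : V →ₗ[ℂ] V) ^ i) w = (A ^ i) w := by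
          intro i
          induction i with
          | zero => intro w; rfl
          | succ i ih =>
            intro w
            rw [pow_succ, pow_succ, Module.End.mul_apply, ContinuousLinearMap.mul_apply]
            simp only [ih]
            rfl
        rw [hcoe] at hAn
        rw [hAn]
        apply Submodule.neg_mem
        apply Submodule.sum_mem
        intro i hi
        apply Submodule.smul_mem
        rw [hcoe]
        exact Submodule.subset_span ⟨i, Finset.mem_range.mp hi, rfl⟩

      intro v hv
      induction hv using Submodule.span_induction with
      | mem y hy =>
        obtain ⟨k, hk, rfl⟩ := hy
        have : A ((A ^ k) x) = (A ^ (k + 1)) x := by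
          rw [pow_succ']; rfl
        rw [this]
        rcases lt_or_eq_of_le (Nat.succ_le_of_lt hk) with hlt | heq
        · exact hWmem _ hlt
        · have hns : k + 1 = n := heq
          rw [show k + 1 = n from hns]
          exact hch x
      | zero => simp
      | add y z _ _ hy hz => rw [map_add]; exact W.add_mem hy hz
      | smul c y _ hy => rw [map_smul]; exact W.smul_mem c hy
    -- hence B (A^k x) = 0 for all k, by induction
    have hBall : ∀ k : ℕ, (A ^ k) x ∈ W := by
      intro k
      induction k with
      | zero =>
        rcases Nat.eq_zero_or_pos n with hn0 | hn0
        · -- n = 0 : V is trivial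
          have : Module.finrank ℂ V = 0 := hn0 ▸ hn.symm
          have : Subsingleton V := by rwa [Module.finrank_zero_iff] at this
          have hx0 : (A ^ 0) x = 0 := Subsingleton.elim _ _
          rw [hx0]; exact W.zero_mem
        · exact hWmem 0 hn0
      | succ k ih =>
        have : (A ^ (k + 1)) x = A ((A ^ k) x) := by rw [pow_succ']; rfl
        rw [this]
        exact hAW _ ih
    have hB : ∀ k : ℕ, B ((A ^ k) x) = 0 := fun k => hWker _ (hBall k)
    -- (A+B)^k x = A^k x for all k
    have hpow : ∀ k : ℕ, ((A + B) ^ k) x = (A ^ k) x := by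
      intro k
      induction k with
      | zero => rfl
      | succ k ih =>
        rw [pow_succ', pow_succ']
        show (A + B) (((A + B) ^ k) x) = A ((A ^ k) x)
        rw [ih]
        rw [ContinuousLinearMap.add_apply, hB k, add_zero]
    -- conclude via tsum
    rw [exp_apply_tsum, exp_apply_tsum]
    congr 1
    funext m
    rw [smul_pow, smul_pow]
    simp only [ContinuousLinearMap.smul_apply]
    rw [hpow m]
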